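/- Every graph G contains an (ε₁, t)-expander subgraph H with average degree d(H) ≥ d(G)/2 and minimum degree δ(H) ≥ d(H)/2, for some universal constant ε₁ > 0 and every t > 0. -/

import Mathlib

open Set

/-- External neighborhood of a vertex set `U` in `G`. -/
noncomputable def extN {V : Type*} (G : SimpleGraph V) (U : Set V) : Set V :=
  {v | v ∉ U ∧ ∃ u ∈ U, G.Adj u v}

/-- The sublinear expansion rate function of Komlós–Szemerédi /
Haslegrave–Kim–Liu. -/
noncomputable def rho (ε₁ t x : ℝ) : ℝ :=
  if x < t / 5 then 0 else ε₁ / (Real.log (15 * x / t)) ^ 2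

/-- Average degree of the induced subgraph `G[W]`, i.e. `2 e(G[W]) / |W|`
(the numerator counts ordered adjacent pairs inside `W`). -/
noncomputable def avgDeg {V : Type*} (G : SimpleGraph V) (W : Set V) : ℝ :=
  ({p : V × V | p.1 ∈ W ∧ p.2 ∈ W ∧ G.Adj p.1 p.2}.ncard : ℝ) / W.ncard

/-- `H` (a subgraph of the ambient graph, with vertex set `W`) is an
`(ε₁, t)`-expander in the robust sense of Haslegrave, Kim and Liu: for every
`X ⊆ W` with `t/2 ≤ |X| ≤ |W|/2` and every subgraph `F` of `H` with
`e(F) ≤ d(H)·ρ(|X|)·|X|`, we have `|N_{H∖F}(X)| ≥ ρ(|X|)·|X|`. -/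
def RobustExpander {V : Type*} [Fintype V] (H : SimpleGraph V) (W : Set V)
    (ε₁ t : ℝ) : Prop :=
  ∀ X : Set V, X ⊆ W → t / 2 ≤ (X.ncard : ℝ) → (X.ncard : ℝ) ≤ (W.ncard : ℝ) / 2 →
    ∀ F : SimpleGraph V, F ≤ H →
      (F.edgeSet.ncard : ℝ) ≤ avgDeg H W * rho ε₁ t X.ncard * X.ncard →
      rho ε₁ t X.ncard * X.ncard ≤ ((extN (H \ F) X).ncard : ℝ)


noncomputable def lam (t y : ℝ) : ℝ :=
  Real.exp (-(1/2) / max (Real.log (15 * y / t)) (Real.log 3))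

lemma one_lt_log_three : (1:ℝ) < Real.log 3 := by
  rw [Real.lt_log_iff_exp_lt (by norm_num)]
  have := Real.exp_one_lt_d9; linarith

lemma lam_pos (t y : ℝ) : 0 < lam t y := Real.exp_pos _

lemma lam_le_one (t y : ℝ) : lam t y ≤ 1 := by
  have h3 := one_lt_log_three
  have hm : (0:ℝ) < max (Real.log (15 * y / t)) (Real.log 3) :=
    lt_of_lt_of_le (by linarith) (le_max_right _ _)
  have : -(1/2) / max (Real.log (15 * y / t)) (Real.log 3) ≤ 0 := by
    apply div_nonpos_of_nonpos_of_nonneg <;> linarith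
  calc lam t y ≤ Real.exp 0 := Real.exp_le_exp.2 this
  _ = 1 := Real.exp_zero

lemma half_le_lam (t y : ℝ) : 1/2 ≤ lam t y := by
  have h3 := one_lt_log_three
  have hm : (1:ℝ) < max (Real.log (15 * y / t)) (Real.log 3) :=
    lt_of_lt_of_le h3 (le_max_right _ _)
  have h2 : (0.6931:ℝ) < Real.log 2 := by
    have := Real.log_two_gt_d9; linarith
  have key : -Real.log 2 ≤ -(1/2) / max (Real.log (15 * y / t)) (Real.log 3) := by
    rw [neg_div, neg_le_neg_iff]
    rw [div_le_iff₀ (by linarith)]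
    nlinarith
  calc (1/2 : ℝ) = Real.exp (-Real.log 2) := by
        rw [Real.exp_neg, Real.exp_log] <;> norm_num
  _ ≤ lam t y := Real.exp_le_exp.2 key

lemma lam_mono (t : ℝ) (ht : 0 < t) {y z : ℝ} (hy : 0 ≤ y) (hyz : y ≤ z) :
    lam t y ≤ lam t z := by
  have h3 := one_lt_log_three
  have hmax : max (Real.log (15 * y / t)) (Real.log 3)
      ≤ max (Real.log (15 * z / t)) (Real.log 3) := by
    rcases eq_or_lt_of_le hy with h0 | h0
    · have hy0 : 15 * y / t = 0 := by rw [← h0]; simp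
      rw [hy0, Real.log_zero]
      exact max_le (le_trans (by linarith : (0:ℝ) ≤ Real.log 3) (le_max_right _ _))
        (le_max_right _ _)
    · apply max_le_max _ le_rfl
      apply Real.log_le_log (by positivity)
      gcongr
  apply Real.exp_le_exp.2
  rw [neg_div, neg_div, neg_le_neg_iff]
  have hm1 : (0:ℝ) < max (Real.log (15 * y / t)) (Real.log 3) :=
    lt_of_lt_of_le (by linarith) (le_max_right _ _)
  apply div_le_div_of_nonneg_left (by norm_num) hm1 hmax

lemma log_ge_two {t x : ℝ} (ht : 0 < t) (hx : t/2 ≤ x) : 2 ≤ Real.log (15 * x / t) := by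
  have h75 : (7.5:ℝ) ≤ 15 * x / t := by
    rw [le_div_iff₀ ht]; linarith
  have he2 : Real.exp 2 ≤ 7.5 := by
    have h := Real.exp_one_lt_d9
    have h2 : Real.exp 2 = Real.exp 1 * Real.exp 1 := by
      rw [← Real.exp_add]; norm_num
    nlinarith [Real.exp_pos 1]
  rw [Real.le_log_iff_exp_le (by linarith)]
  linarith

set_option maxHeartbeats 1000000 in
lemma key_ineq {t x : ℝ} (ht : 0 < t) (hx : t/2 ≤ x) :
    (1 + 1/100 / Real.log (15 * x / t) ^ 2) *
        lam t ((1 + 1/100 / Real.log (15 * x / t) ^ 2) * x)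
      < (1 - 2 * (1/100 / Real.log (15 * x / t) ^ 2)) * lam t (2 * x) := by
  have hx0 : 0 < x := by linarith
  set l := Real.log (15 * x / t) with hl
  have hl2 : 2 ≤ l := log_ge_two ht hx
  set p : ℝ := 1/100 / l ^ 2 with hp
  have hppos : 0 < p := by rw [hp]; positivity
  have hple : p ≤ 1/400 := by
    rw [hp, div_le_div_iff₀ (by nlinarith) (by norm_num)]
    nlinarith
  set a := Real.log (1 + p) with ha
  have ha0 : 0 ≤ a := Real.log_nonneg (by linarith)
  have hap : a ≤ p := by
    have := Real.log_le_sub_one_of_pos (show (0:ℝ) < 1 + p by linarith)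
    linarith
  have hL2l : (6931/10000:ℝ) < Real.log 2 := by have := Real.log_two_gt_d9; linarith
  have hL2u : Real.log 2 < (6932/10000:ℝ) := by have := Real.log_two_lt_d9; linarith
  set L2 := Real.log 2 with hL2
  -- compute lam t ((1+p)*x)
  have hlam1 : lam t ((1 + p) * x) = Real.exp (-(1/2) / (a + l)) := by
    unfold lam
    congr 2
    have harg : 15 * ((1 + p) * x) / t = (1 + p) * (15 * x / t) := by ring
    rw [harg, Real.log_mul (by linarith) (by positivity), ← ha, ← hl]
    refine max_eq_left ?_
    have h3 : Real.log 3 ≤ 2 := by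
      rw [Real.log_le_iff_le_exp (by norm_num)]
      have h := Real.exp_one_gt_d9
      have h2 : Real.exp 2 = Real.exp 1 * Real.exp 1 := by rw [← Real.exp_add]; norm_num
      nlinarith
    linarith
  have hlam2 : lam t (2 * x) = Real.exp (-(1/2) / (L2 + l)) := by
    unfold lam
    congr 2
    have harg : 15 * (2 * x) / t = 2 * (15 * x / t) := by ring
    rw [harg, Real.log_mul (by norm_num) (by positivity), ← hL2, ← hl]
    refine max_eq_left ?_
    have h3 : Real.log 3 ≤ 2 := by
      rw [Real.log_le_iff_le_exp (by norm_num)]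
      have h := Real.exp_one_gt_d9
      have h2 : Real.exp 2 = Real.exp 1 * Real.exp 1 := by rw [← Real.exp_add]; norm_num
      nlinarith
    linarith
  rw [hlam1, hlam2]
  set A := a + l with hA
  set B := L2 + l with hB
  have hApos : 0 < A := by rw [hA]; linarith
  have hBpos : 0 < B := by rw [hB]; linarith
  set d := (1/2) / A - (1/2) / B with hd
  have hdval : d = (B - A) / (2 * A * B) := by
    rw [hd]; field_simp
  have hl2pos : (0:ℝ) < l ^ 2 := by positivity
  have hpl2 : p * l ^ 2 = 1/100 := by rw [hp]; field_simp
  have hdlb : 3/20 ≤ d * l ^ 2 := by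
    have hBA : (69/100:ℝ) ≤ B - A := by rw [hA, hB]; linarith
    have hden : 0 < 2 * A * B := by positivity
    have hden2 : 2 * A * B ≤ (9/2) * l ^ 2 := by nlinarith
    have hdv : d * l ^ 2 = (B - A) * l ^ 2 / (2 * A * B) := by rw [hdval]; ring
    rw [hdv, le_div_iff₀ hden]
    nlinarith
  have hdub : d ≤ 1/4 := by
    have h1 : (1/2) / A ≤ 1/4 := by
      rw [div_le_iff₀ hApos]; linarith
    have h2 : 0 ≤ (1/2) / B := by positivity
    rw [hd]; linarith
  have hpd : 15 * p ≤ d := by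
    have h1 : 15 * p * l ^ 2 ≤ d * l ^ 2 := by
      rw [show 15 * p * l ^ 2 = 15 * (p * l ^ 2) by ring, hpl2]
      linarith
    exact le_of_mul_le_mul_right h1 hl2pos
  -- main numeric inequality : (1+p) < (1-2p)(1+d)
  have hmain : 1 + p < (1 - 2*p) * (1 + d) := by
    nlinarith [mul_le_mul_of_nonneg_left hdub (by linarith : (0:ℝ) ≤ 2*p)]
  have hexp : Real.exp (-(1/2)/B) = Real.exp d * Real.exp (-(1/2)/A) := by
    rw [← Real.exp_add]
    congr 1
    rw [hd]; ring
  have hde : 1 + d ≤ Real.exp d := by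
    have := Real.add_one_le_exp d; linarith
  calc (1 + p) * Real.exp (-(1/2) / A)
      < ((1 - 2*p) * (1 + d)) * Real.exp (-(1/2) / A) := by
        exact mul_lt_mul_of_pos_right hmain (Real.exp_pos _)
    _ ≤ ((1 - 2*p) * Real.exp d) * Real.exp (-(1/2) / A) := by
        have h2p : (0:ℝ) ≤ 1 - 2*p := by linarith
        have : (1 - 2*p) * (1 + d) ≤ (1 - 2*p) * Real.exp d :=
          mul_le_mul_of_nonneg_left hde h2p
        exact mul_le_mul_of_nonneg_right this (Real.exp_pos _).le
    _ = (1 - 2*p) * Real.exp (-(1/2) / B) := by rw [hexp]; ring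

lemma ncard_pairs_F {V : Type} [Fintype V] (F : SimpleGraph V) :
    {p : V × V | F.Adj p.1 p.2}.ncard = 2 * F.edgeSet.ncard := by
  classical
  have e : {p : V × V | F.Adj p.1 p.2} ≃ F.Dart :=
    { toFun := fun p => ⟨p.1, p.2⟩
      invFun := fun d => ⟨d.toProd, d.adj⟩
      left_inv := fun p => rfl
      right_inv := fun d => rfl }
  have h1 : {p : V × V | F.Adj p.1 p.2}.ncard = Fintype.card F.Dart := by
    rw [Set.ncard_eq_toFinset_card', Set.toFinset_card]
    exact Fintype.card_congr e
  rw [h1, F.dart_card_eq_twice_card_edges, Set.ncard_eq_toFinset_card']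
  congr 2

/-- The subgraph of `H` induced (edge-wise) on a vertex set `S`. -/
def restrict {V : Type} (H : SimpleGraph V) (S : Set V) : SimpleGraph V where
  Adj a b := H.Adj a b ∧ a ∈ S ∧ b ∈ S
  symm := ⟨fun a b h => ⟨h.1.symm, h.2.2, h.2.1⟩⟩
  loopless := ⟨fun a h => H.loopless.irrefl a h.1⟩

set_option maxHeartbeats 1600000 in
theorem stmt_7 :
    ∃ ε₁ : ℝ, 0 < ε₁ ∧ ∀ t : ℝ, 0 < t →
      ∀ (V : Type) [Fintype V] (G : SimpleGraph V),
        ∃ (W : Set V) (H : SimpleGraph V), H ≤ G ∧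
          (∀ u v : V, H.Adj u v → u ∈ W ∧ v ∈ W) ∧
          avgDeg G Set.univ / 2 ≤ avgDeg H W ∧
          (∀ v ∈ W, avgDeg H W / 2 ≤ ((H.neighborSet v).ncard : ℝ)) ∧
          RobustExpander H W ε₁ t := by
  refine ⟨1/100, by norm_num, ?_⟩
  intro t ht V _ G
  classical
  by_cases hE : ∃ u v, G.Adj u v
  case neg =>
    push_neg at hE
    refine ⟨∅, ⊥, bot_le, fun u v h => by simp at h, ?_, ?_, ?_⟩
    · have h1 : avgDeg G Set.univ = 0 := by
        have he : {p : V × V | p.1 ∈ (Set.univ : Set V) ∧ p.2 ∈ (Set.univ : Set V)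
            ∧ G.Adj p.1 p.2} = ∅ := by
          ext p; simp [hE]
        unfold avgDeg; rw [he]; simp
      have h2 : avgDeg (⊥ : SimpleGraph V) ∅ = 0 := by
        unfold avgDeg; simp
      rw [h1, h2]; norm_num
    · intro v hv; exact absurd hv (Set.notMem_empty v)
    · intro X hX h1 h2 F hF hFe
      have hX0 : X = ∅ := Set.subset_empty_iff.mp hX
      rw [hX0] at h1; simp at h1; linarith
  case pos =>
  obtain ⟨u0, v0, huv0⟩ := hE
  have : Nonempty {p : SimpleGraph V × Set V //
      p.1 ≤ G ∧ ∀ u v : V, p.1.Adj u v → u ∈ p.2 ∧ v ∈ p.2} :=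
    ⟨⟨(G, Set.univ), le_rfl, fun u v _ => ⟨Set.mem_univ u, Set.mem_univ v⟩⟩⟩
  obtain ⟨⟨⟨H, W⟩, hHG, hHW⟩, hm⟩ :=
    Finite.exists_max (fun p : {p : SimpleGraph V × Set V //
        p.1 ≤ G ∧ ∀ u v : V, p.1.Adj u v → u ∈ p.2 ∧ v ∈ p.2} =>
      avgDeg p.1.1 p.1.2 / lam t (p.1.2.ncard : ℝ))
  have hmax : ∀ (H' : SimpleGraph V) (W' : Set V), H' ≤ G →
      (∀ u v : V, H'.Adj u v → u ∈ W' ∧ v ∈ W') →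
      avgDeg H' W' / lam t (W'.ncard : ℝ) ≤ avgDeg H W / lam t (W.ncard : ℝ) :=
    fun H' W' h1 h2 => hm ⟨(H', W'), h1, h2⟩
  set D := avgDeg H W with hD
  set w : ℝ := (W.ncard : ℝ) with hw
  have hD0 : 0 ≤ D := by rw [hD]; unfold avgDeg; positivity
  have hn1 : 1 ≤ ((Set.univ : Set V).ncard : ℝ) := by
    have h1 : (Set.univ : Set V).Nonempty := ⟨u0, trivial⟩
    have h2 := (Set.ncard_pos (Set.toFinite _)).mpr h1
    exact_mod_cast h2
  have hApos : 0 < avgDeg G Set.univ := by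
    unfold avgDeg
    apply div_pos
    · have hne : {p : V × V | p.1 ∈ (Set.univ : Set V) ∧ p.2 ∈ (Set.univ : Set V)
          ∧ G.Adj p.1 p.2}.Nonempty := ⟨(u0, v0), trivial, trivial, huv0⟩
      have h2 := (Set.ncard_pos (Set.toFinite _)).mpr hne
      exact_mod_cast h2
    · linarith
  have hGm := hmax G Set.univ le_rfl (fun u v _ => ⟨trivial, trivial⟩)
  have hhalf : avgDeg G Set.univ / 2 ≤ D := by
    have h1 : avgDeg G Set.univ ≤ avgDeg G Set.univ / lam t ((Set.univ : Set V).ncard : ℝ) := by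
      rw [le_div_iff₀ (lam_pos _ _)]
      nlinarith [lam_le_one t ((Set.univ : Set V).ncard : ℝ), hApos]
    have h2 : D / lam t w ≤ 2 * D := by
      rw [div_le_iff₀ (lam_pos _ _)]
      nlinarith [half_le_lam t w]
    linarith
  have hDpos : 0 < D := by linarith
  have hwpos : 0 < w := by
    by_contra hcon
    push_neg at hcon
    have hw0 : w = 0 := le_antisymm hcon (by rw [hw]; exact Nat.cast_nonneg _)
    have : D = 0 := by rw [hD]; unfold avgDeg; rw [← hw, hw0, div_zero]
    linarith
  have pairs_le : ∀ (H' : SimpleGraph V) (W' : Set V), H' ≤ G →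
      (∀ u v : V, H'.Adj u v → u ∈ W' ∧ v ∈ W') →
      ({p : V × V | p.1 ∈ W' ∧ p.2 ∈ W' ∧ H'.Adj p.1 p.2}.ncard : ℝ)
        ≤ (D / lam t w) * ((W'.ncard : ℝ) * lam t (W'.ncard : ℝ)) := by
    intro H' W' h1 h2
    by_cases hw' : W'.ncard = 0
    · have hWe : W' = ∅ := (Set.ncard_eq_zero (Set.toFinite _)).mp hw'
      have hpe : {p : V × V | p.1 ∈ W' ∧ p.2 ∈ W' ∧ H'.Adj p.1 p.2} = ∅ := by
        ext p; simp [hWe]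
      rw [hpe, hw']
      simp
    · have hw'pos : (0 : ℝ) < (W'.ncard : ℝ) := by exact_mod_cast Nat.pos_of_ne_zero hw'
      have h := hmax H' W' h1 h2
      have hlp : 0 < lam t (W'.ncard : ℝ) := lam_pos _ _
      unfold avgDeg at h
      calc ({p : V × V | p.1 ∈ W' ∧ p.2 ∈ W' ∧ H'.Adj p.1 p.2}.ncard : ℝ)
          = (({p : V × V | p.1 ∈ W' ∧ p.2 ∈ W' ∧ H'.Adj p.1 p.2}.ncard : ℝ) / (W'.ncard : ℝ)
              / lam t (W'.ncard : ℝ)) * ((W'.ncard : ℝ) * lam t (W'.ncard : ℝ)) := by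
            field_simp
      _ ≤ (D / lam t w) * ((W'.ncard : ℝ) * lam t (W'.ncard : ℝ)) :=
            mul_le_mul_of_nonneg_right h (by positivity)
  refine ⟨W, H, hHG, hHW, hhalf, ?_, ?_⟩
  · -- minimum degree
    intro v hv
    by_contra hcon
    push_neg at hcon
    have hP : ({p : V × V | p.1 ∈ W ∧ p.2 ∈ W ∧ H.Adj p.1 p.2}.ncard : ℝ) = D * w := by
      rw [hD]
      unfold avgDeg
      rw [← hw]
      field_simp
    set Wv := W \ {v} with hWv
    set Hv := restrict H Wv with hHv
    have hcov : {p : V × V | p.1 ∈ W ∧ p.2 ∈ W ∧ H.Adj p.1 p.2}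
        ⊆ {p : V × V | p.1 ∈ Wv ∧ p.2 ∈ Wv ∧ Hv.Adj p.1 p.2}
          ∪ ((fun u => (v, u)) '' H.neighborSet v ∪ (fun u => (u, v)) '' H.neighborSet v) := by
      rintro ⟨a, b⟩ ⟨haW, hbW, hab⟩
      by_cases hav : a = v
      · subst hav; exact Or.inr (Or.inl ⟨b, hab, rfl⟩)
      by_cases hbv : b = v
      · subst hbv; exact Or.inr (Or.inr ⟨a, hab.symm, rfl⟩)
      · exact Or.inl ⟨⟨haW, hav⟩, ⟨hbW, hbv⟩, hab, ⟨haW, hav⟩, ⟨hbW, hbv⟩⟩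
    have himg1 : ((fun u => (v, u)) '' H.neighborSet v).ncard = (H.neighborSet v).ncard :=
      Set.ncard_image_of_injective _ (fun a b h => by simpa using congrArg Prod.snd h)
    have himg2 : ((fun u => (u, v)) '' H.neighborSet v).ncard = (H.neighborSet v).ncard :=
      Set.ncard_image_of_injective _ (fun a b h => by simpa using congrArg Prod.fst h)
    have hcard : ({p : V × V | p.1 ∈ W ∧ p.2 ∈ W ∧ H.Adj p.1 p.2}.ncard : ℝ)
        ≤ ({p : V × V | p.1 ∈ Wv ∧ p.2 ∈ Wv ∧ Hv.Adj p.1 p.2}.ncard : ℝ)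
          + ((H.neighborSet v).ncard : ℝ) + ((H.neighborSet v).ncard : ℝ) := by
      have h1 := Set.ncard_le_ncard hcov (Set.toFinite _)
      have h2 := Set.ncard_union_le
        {p : V × V | p.1 ∈ Wv ∧ p.2 ∈ Wv ∧ Hv.Adj p.1 p.2}
        ((fun u => (v, u)) '' H.neighborSet v ∪ (fun u => (u, v)) '' H.neighborSet v)
      have h3 := Set.ncard_union_le ((fun u => (v, u)) '' H.neighborSet v)
        ((fun u => (u, v)) '' H.neighborSet v)
      rw [himg1, himg2] at h3
      push_cast
      have := le_trans h1 h2
      exact_mod_cast le_trans this (by omega)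
    have hQle := pairs_le Hv Wv (fun a b h => hHG h.1) (fun a b h => ⟨h.2.1, h.2.2⟩)
    have hw1 : 1 ≤ W.ncard := by
      have := (Set.ncard_pos (Set.toFinite _)).mpr ⟨v, hv⟩
      omega
    have hwv : ((Wv).ncard : ℝ) = w - 1 := by
      rw [hWv, Set.ncard_diff_singleton_of_mem hv, hw]
      push_cast [Nat.cast_sub hw1]
      ring
    have hQ2 : ({p : V × V | p.1 ∈ Wv ∧ p.2 ∈ Wv ∧ Hv.Adj p.1 p.2}.ncard : ℝ)
        ≤ D * (w - 1) := by
      refine le_trans hQle ?_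
      have hl1 : lam t ((Wv.ncard : ℝ)) ≤ lam t w :=
        lam_mono t ht (Nat.cast_nonneg _) (by rw [hwv]; linarith)
      have hstep : (D / lam t w) * ((Wv.ncard : ℝ) * lam t (Wv.ncard : ℝ))
          ≤ (D / lam t w) * ((Wv.ncard : ℝ) * lam t w) := by
        apply mul_le_mul_of_nonneg_left _ (div_nonneg hD0 (lam_pos t w).le)
        exact mul_le_mul_of_nonneg_left hl1 (Nat.cast_nonneg _)
      refine le_trans hstep ?_
      rw [hwv]
      have heq : (D / lam t w) * ((w - 1) * lam t w) = D * (w - 1) := by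
        have hlne : lam t w ≠ 0 := (lam_pos t w).ne'
        field_simp
      rw [heq]
    rw [← hD] at hcon
    linarith
  · -- robust expander
    intro X hXW hxt hxw F hFH hFe
    by_contra hcon
    push_neg at hcon
    set x : ℝ := (X.ncard : ℝ) with hx
    have hx0 : 0 < x := lt_of_lt_of_le (by linarith) hxt
    set l := Real.log (15 * x / t) with hl
    have hl2 : 2 ≤ l := log_ge_two ht hxt
    set p : ℝ := 1/100 / l ^ 2 with hp
    have hppos : 0 < p := by rw [hp]; positivity
    have hple : p ≤ 1/400 := by
      rw [hp, div_le_div_iff₀ (by nlinarith) (by norm_num)]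
      nlinarith
    have hrho : rho (1/100) t (X.ncard : ℝ) = p := by
      unfold rho
      rw [if_neg (by push_neg; linarith : ¬ ((X.ncard : ℝ) < t/5))]
    rw [hrho] at hcon hFe
    rw [← hD] at hFe
    set N := extN (H \ F) X with hN
    set ν : ℝ := (N.ncard : ℝ) with hnu
    have hν : ν < p * x := hcon
    set B := X ∪ N with hB
    have hNW : N ⊆ W := by
      rintro y ⟨hyX, u, huX, huy⟩
      have : H.Adj u y := ((SimpleGraph.sdiff_adj _ _ _ _).mp huy).1
      exact (hHW u y this).2
    have hBW : B ⊆ W := Set.union_subset hXW hNW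
    set b : ℝ := (B.ncard : ℝ) with hb
    have hbx : b ≤ x + ν := by
      rw [hb, hx, hnu, hB]
      exact_mod_cast Set.ncard_union_le X N
    have hbge : x ≤ b := by
      rw [hb, hx]
      exact_mod_cast Set.ncard_le_ncard Set.subset_union_left (Set.toFinite _)
    have hxw2 : 2 * x ≤ w := by linarith
    have hXle : X.ncard ≤ W.ncard := Set.ncard_le_ncard hXW (Set.toFinite _)
    have hWX : (((W \ X)).ncard : ℝ) = w - x := by
      rw [Set.ncard_diff hXW, hw, hx]
      push_cast [Nat.cast_sub hXle]
      ring
    set H1 := restrict (H \ F) B with hH1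
    set H2 := restrict H (W \ X) with hH2
    have hcov : {q : V × V | q.1 ∈ W ∧ q.2 ∈ W ∧ H.Adj q.1 q.2}
        ⊆ {q : V × V | q.1 ∈ B ∧ q.2 ∈ B ∧ H1.Adj q.1 q.2}
          ∪ ({q : V × V | q.1 ∈ W \ X ∧ q.2 ∈ W \ X ∧ H2.Adj q.1 q.2}
            ∪ {q : V × V | F.Adj q.1 q.2}) := by
      rintro ⟨u, v⟩ ⟨huW, hvW, huv⟩
      by_cases hF : F.Adj u v
      · exact Or.inr (Or.inr hF)
      by_cases hX : u ∈ X ∨ v ∈ X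
      · left
        have hsd : (H \ F).Adj u v := (SimpleGraph.sdiff_adj _ _ _ _).mpr ⟨huv, hF⟩
        have huB : u ∈ B := by
          rcases hX with h | h
          · exact Or.inl h
          · by_cases huX : u ∈ X
            · exact Or.inl huX
            · exact Or.inr ⟨huX, v, h, hsd.symm⟩
        have hvB : v ∈ B := by
          rcases hX with h | h
          · by_cases hvX : v ∈ X
            · exact Or.inl hvX
            · exact Or.inr ⟨hvX, u, h, hsd⟩
          · exact Or.inl h
        exact ⟨huB, hvB, hsd, huB, hvB⟩
      · push_neg at hX
        exact Or.inr (Or.inl ⟨⟨huW, hX.1⟩, ⟨hvW, hX.2⟩, huv, ⟨huW, hX.1⟩, ⟨hvW, hX.2⟩⟩)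
    have hcard : ({q : V × V | q.1 ∈ W ∧ q.2 ∈ W ∧ H.Adj q.1 q.2}.ncard : ℝ)
        ≤ ({q : V × V | q.1 ∈ B ∧ q.2 ∈ B ∧ H1.Adj q.1 q.2}.ncard : ℝ)
          + ({q : V × V | q.1 ∈ W \ X ∧ q.2 ∈ W \ X ∧ H2.Adj q.1 q.2}.ncard : ℝ)
          + ({q : V × V | F.Adj q.1 q.2}.ncard : ℝ) := by
      have h1 := Set.ncard_le_ncard hcov (Set.toFinite _)
      have h2 := Set.ncard_union_le
        {q : V × V | q.1 ∈ B ∧ q.2 ∈ B ∧ H1.Adj q.1 q.2}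
        ({q : V × V | q.1 ∈ W \ X ∧ q.2 ∈ W \ X ∧ H2.Adj q.1 q.2}
          ∪ {q : V × V | F.Adj q.1 q.2})
      have h3 := Set.ncard_union_le
        {q : V × V | q.1 ∈ W \ X ∧ q.2 ∈ W \ X ∧ H2.Adj q.1 q.2}
        {q : V × V | F.Adj q.1 q.2}
      exact_mod_cast le_trans h1 (le_trans h2 (by omega))
    have hP : ({q : V × V | q.1 ∈ W ∧ q.2 ∈ W ∧ H.Adj q.1 q.2}.ncard : ℝ) = D * w := by
      rw [hD]
      unfold avgDeg
      rw [← hw]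
      field_simp
    have hPF : ({q : V × V | F.Adj q.1 q.2}.ncard : ℝ) ≤ 2 * (D * p * x) := by
      rw [ncard_pairs_F F]
      push_cast
      linarith
    have hP1 := pairs_le H1 B
      (fun a b h => hHG ((SimpleGraph.sdiff_adj _ _ _ _).mp h.1).1)
      (fun a b h => ⟨h.2.1, h.2.2⟩)
    have hP2 := pairs_le H2 (W \ X)
      (fun a b h => hHG h.1)
      (fun a b h => ⟨h.2.1, h.2.2⟩)
    -- bound the B-term
    set c1 := lam t ((1 + p) * x) with hc1
    have hKnn : 0 ≤ D / lam t w := div_nonneg hD0 (lam_pos t w).le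
    have hP1' : ({q : V × V | q.1 ∈ B ∧ q.2 ∈ B ∧ H1.Adj q.1 q.2}.ncard : ℝ)
        ≤ (D / lam t w) * ((1 + p) * x * c1) := by
      refine le_trans hP1 ?_
      apply mul_le_mul_of_nonneg_left _ hKnn
      have hble : b ≤ (1 + p) * x := by linarith
      have hlamb : lam t b ≤ c1 := by
        rw [hc1]
        exact lam_mono t ht (by rw [hb]; exact Nat.cast_nonneg _) hble
      rw [← hb]
      have hc1x : 0 ≤ (1 + p) * x := mul_nonneg (by linarith) hx0.le
      exact mul_le_mul hble hlamb (lam_pos _ _).le hc1x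
    have hP2' : ({q : V × V | q.1 ∈ W \ X ∧ q.2 ∈ W \ X ∧ H2.Adj q.1 q.2}.ncard : ℝ)
        ≤ D * (w - x) := by
      refine le_trans hP2 ?_
      rw [hWX]
      have hlam2 : lam t (w - x) ≤ lam t w := lam_mono t ht (by linarith) (by linarith)
      have hstep : (D / lam t w) * ((w - x) * lam t (w - x))
          ≤ (D / lam t w) * ((w - x) * lam t w) := by
        apply mul_le_mul_of_nonneg_left _ hKnn
        exact mul_le_mul_of_nonneg_left hlam2 (by linarith)
      refine le_trans hstep (le_of_eq ?_)
      have hlne : lam t w ≠ 0 := (lam_pos t w).ne'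
      field_simp
    -- combine
    have hmain : D * x * ((1 - 2*p) * lam t w) ≤ D * x * ((1 + p) * c1) := by
      have hbig : D * w ≤ (D / lam t w) * ((1 + p) * x * c1) + D * (w - x) + 2 * (D * p * x) := by
        rw [← hP]
        linarith
      have hdiv : (D / lam t w) * ((1 + p) * x * c1) * lam t w = D * ((1 + p) * x * c1) := by
        have hlne : lam t w ≠ 0 := (lam_pos t w).ne'
        field_simp
      have hbig2 : D * x * (1 - 2*p) ≤ (D / lam t w) * ((1 + p) * x * c1) := by linarith
      have hmm := mul_le_mul_of_nonneg_right hbig2 (lam_pos t w).le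
      rw [hdiv] at hmm
      calc D * x * ((1 - 2*p) * lam t w) = D * x * (1 - 2*p) * lam t w := by ring
      _ ≤ D * ((1 + p) * x * c1) := hmm
      _ = D * x * ((1 + p) * c1) := by ring
    have hcancel : (1 - 2*p) * lam t w ≤ (1 + p) * c1 :=
      le_of_mul_le_mul_left hmain (mul_pos hDpos hx0)
    have hkey := key_ineq ht hxt
    rw [← hl, ← hp, ← hc1] at hkey
    have h10 : lam t (2 * x) ≤ lam t w := lam_mono t ht (by linarith) hxw2
    have h11 : (1 + p) * c1 < (1 - 2*p) * lam t w :=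
      lt_of_lt_of_le hkey (mul_le_mul_of_nonneg_left h10 (by linarith))
    linarith
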